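/- arXiv:1312.6569 — 2 statements merged into one kernel-verified Lean document; each statement's English description precedes it below -/
import Mathlib

section
/- Let B be an associative algebra over ℂ. If φ is a cyclic (p+1)-linear functional on B, meaning φ(a₀,a₁,…,a_p) = (-1)^p φ(a_p,a₀,a₁,…,a_{p-1}) for all arguments, then the Hochschild coboundary bφ is a cyclic (p+2)-linear functional. -/
/-- The Hochschild coboundary `b` sending a `p`-cochain (a `(p+1)`-linear functional)
on an associative algebra `B` to a `(p+1)`-cochain. -/
noncomputable def hochschildB {B : Type*} [NonUnitalRing B] [Module ℂ B]
    (p : ℕ) (φ : (Fin (p + 1) → B) → ℂ) : (Fin (p + 2) → B) → ℂ :=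
  fun a =>
    (∑ j : Fin (p + 1), (-1 : ℂ) ^ (j : ℕ) *
      φ (fun i => if (i : ℕ) < (j : ℕ) then a i.castSucc
          else if (i : ℕ) = (j : ℕ) then a i.castSucc * a i.succ
          else a i.succ))
    + (-1 : ℂ) ^ (p + 1) *
      φ (fun i => if (i : ℕ) = 0 then a (Fin.last (p + 1)) * a 0 else a i.castSucc)

/-- A `(p+1)`-linear functional `φ` is cyclic if
`φ(a₀,a₁,…,a_p) = (-1)^p φ(a_p,a₀,…,a_{p-1})`. -/
def IsCyclicCochain {B : Type*} [NonUnitalRing B] [Module ℂ B]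
    (p : ℕ) (φ : (Fin (p + 1) → B) → ℂ) : Prop :=
  ∀ a : Fin (p + 1) → B, φ a = (-1 : ℂ) ^ p * φ (fun i => a (i - 1))

/-- If `φ` is a cyclic `(p+1)`-linear functional on an associative algebra `B` over `ℂ`,
then its Hochschild coboundary `bφ` is a cyclic `(p+2)`-linear functional. -/
theorem isCyclicCochain_hochschildB {B : Type*} [NonUnitalRing B] [Module ℂ B] (p : ℕ)
    (φ : MultilinearMap ℂ (fun _ : Fin (p + 1) => B) ℂ)
    (hφ : IsCyclicCochain p ⇑φ) :
    IsCyclicCochain (p + 1) (hochschildB p ⇑φ) := by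
  intro a
  have h0' : (0 : Fin (p + 2)) - 1 = Fin.last (p + 1) := by ext; simp [Fin.coe_sub_one]
  have h0 : (0 : Fin (p + 1)) - 1 = Fin.last p := by ext; simp [Fin.coe_sub_one]
  have hlast : ((Fin.last (p+1) - 1 : Fin (p+2)) : ℕ) = p := by
    rw [Fin.coe_sub_one, if_neg (by simp [Fin.ext_iff])]; simp
  have hlastC : (Fin.last p).castSucc = Fin.last (p+1) - 1 := by
    ext; simp [Fin.coe_castSucc, Fin.val_last, hlast]
  -- generic facts for i ≠ 0
  have E1 : ∀ j : Fin p,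
      φ (fun i : Fin (p+1) => if (i:ℕ) < (j:ℕ) then a i.castSucc
          else if (i:ℕ) = (j:ℕ) then a i.castSucc * a i.succ else a i.succ)
      = (-1:ℂ)^p * φ (fun i : Fin (p+1) => if (i:ℕ) < (j:ℕ) + 1 then a (i.castSucc - 1)
          else if (i:ℕ) = (j:ℕ) + 1 then a (i.castSucc - 1) * a (i.succ - 1)
          else a (i.succ - 1)) := by
    intro j
    rw [hφ]
    refine congrArg (fun z => (-1:ℂ)^p * φ z) ?_
    funext i
    have hj : (j:ℕ) < p := j.isLt
    rcases eq_or_ne i 0 with rfl | hi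
    · simp only [h0, Fin.val_last, Fin.val_zero, Fin.castSucc_zero, Fin.succ_last, h0']
      split_ifs <;> first | rfl | (exfalso; omega)
    · have hi0 : (i:ℕ) ≠ 0 := fun h => hi (Fin.ext (by rw [h]; rfl))
      have hiL : (i:ℕ) < p + 1 := i.isLt
      have h1 : ((i - 1 : Fin (p+1)) : ℕ) = (i:ℕ) - 1 := by rw [Fin.coe_sub_one, if_neg hi]
      have h2 : ((i.castSucc - 1 : Fin (p+2)) : ℕ) = (i:ℕ) - 1 := by
        rw [Fin.coe_sub_one, if_neg (Fin.castSucc_ne_zero_iff.mpr hi)]; simp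
      have h3 : ((i.succ - 1 : Fin (p+2)) : ℕ) = (i:ℕ) := by
        rw [Fin.coe_sub_one, if_neg (Fin.succ_ne_zero i)]; simp
      have hc : (i - 1 : Fin (p+1)).castSucc = i.castSucc - 1 := by
        ext; simp only [Fin.coe_castSucc, h1, h2]
      have hs : (i - 1 : Fin (p+1)).succ = i.succ - 1 := by
        ext; simp only [Fin.val_succ, h1, h3]; omega
      simp only [h1, hc, hs]
      split_ifs <;> first | rfl | (exfalso; omega)
  have E2 :
      φ (fun i : Fin (p+1) => if (i:ℕ) < p then a i.castSucc
          else if (i:ℕ) = p then a i.castSucc * a i.succ else a i.succ)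
      = (-1:ℂ)^p * φ (fun i : Fin (p+1) => if (i:ℕ) = 0
          then a (Fin.last (p+1) - 1) * a (0 - 1) else a (i.castSucc - 1)) := by
    rw [hφ]
    refine congrArg (fun z => (-1:ℂ)^p * φ z) ?_
    funext i
    rcases eq_or_ne i 0 with rfl | hi
    · simp only [h0, Fin.val_last, Fin.val_zero, Fin.castSucc_zero, Fin.succ_last, h0', hlastC]
      split_ifs <;> first | rfl | (exfalso; omega)
    · have hi0 : (i:ℕ) ≠ 0 := fun h => hi (Fin.ext (by rw [h]; rfl))
      have hiL : (i:ℕ) < p + 1 := i.isLt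
      have h1 : ((i - 1 : Fin (p+1)) : ℕ) = (i:ℕ) - 1 := by rw [Fin.coe_sub_one, if_neg hi]
      have h2 : ((i.castSucc - 1 : Fin (p+2)) : ℕ) = (i:ℕ) - 1 := by
        rw [Fin.coe_sub_one, if_neg (Fin.castSucc_ne_zero_iff.mpr hi)]; simp
      have h3 : ((i.succ - 1 : Fin (p+2)) : ℕ) = (i:ℕ) := by
        rw [Fin.coe_sub_one, if_neg (Fin.succ_ne_zero i)]; simp
      have hc : (i - 1 : Fin (p+1)).castSucc = i.castSucc - 1 := by
        ext; simp only [Fin.coe_castSucc, h1, h2]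
      have hs : (i - 1 : Fin (p+1)).succ = i.succ - 1 := by
        ext; simp only [Fin.val_succ, h1, h3]; omega
      simp only [h1, hc, hs]
      split_ifs <;> first | rfl | (exfalso; omega)
  have E3 : (fun i : Fin (p+1) => if (i:ℕ) = 0 then a (Fin.last (p + 1)) * a 0 else a i.castSucc)
      = (fun i : Fin (p+1) => if (i:ℕ) < 0 then a (i.castSucc - 1)
          else if (i:ℕ) = 0 then a (i.castSucc - 1) * a (i.succ - 1) else a (i.succ - 1)) := by
    funext i
    rcases eq_or_ne i 0 with rfl | hi
    · have hsz : ((0 : Fin (p + 1)).succ - 1 : Fin (p+2)) = 0 := by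
        ext; rw [Fin.coe_sub_one, if_neg (Fin.succ_ne_zero _)]; simp
      simp only [Fin.val_zero, Fin.castSucc_zero, h0', hsz]
      split_ifs <;> first | rfl | (exfalso; omega)
    · have hi0 : (i:ℕ) ≠ 0 := fun h => hi (Fin.ext (by rw [h]; rfl))
      have h3 : ((i.succ - 1 : Fin (p+2)) : ℕ) = (i:ℕ) := by
        rw [Fin.coe_sub_one, if_neg (Fin.succ_ne_zero i)]; simp
      have hsc : i.castSucc = i.succ - 1 := by ext; simp only [Fin.coe_castSucc, h3]
      simp only [hsc]
      split_ifs <;> first | rfl | (exfalso; omega)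
  -- Assemble
  simp only [hochschildB]
  rw [Fin.sum_univ_castSucc]
  conv_rhs => rw [Fin.sum_univ_succ]
  simp only [Fin.coe_castSucc, Fin.val_succ, Fin.val_last, Fin.val_zero, pow_zero, one_mul]
  have hs : (∑ x : Fin p, (-1:ℂ)^(x:ℕ) *
        φ (fun i : Fin (p+1) => if (i:ℕ) < (x:ℕ) then a i.castSucc
          else if (i:ℕ) = (x:ℕ) then a i.castSucc * a i.succ else a i.succ))
      = (-1:ℂ)^(p+1) * ∑ x : Fin p, (-1:ℂ)^((x:ℕ)+1) *
        φ (fun i : Fin (p+1) => if (i:ℕ) < (x:ℕ) + 1 then a (i.castSucc - 1)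
          else if (i:ℕ) = (x:ℕ) + 1 then a (i.castSucc - 1) * a (i.succ - 1)
          else a (i.succ - 1)) := by
    rw [Finset.mul_sum]
    refine Finset.sum_congr rfl fun x _ => ?_
    rw [E1 x]; ring
  rw [hs, E2, E3]
  ring_nf
  rfl
end

section
/- Let B be a unital algebra, φ a trace on B, n an even integer with n ≥ 4, and W₂,…,W_{n-1} ∈ B. Suppose i ∈ {2,…,n-1}. Then Σ_{π ∈ S'} sgn(π) φ(W_i · W_{π(2)} W_{π(3)} ⋯ W_{π(n-1)}) = 0, where S' is the group of permutations of {2,…,n-1}. -/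
open Equiv Finset Fin.NatCast

/-- rotation power applies as addition -/
lemma finRotate_pow_apply {m : ℕ} (p : ℕ) (t : Fin (m+1)) :
    ((finRotate (m+1)) ^ p) t = t + (p : Fin (m+1)) := by
  induction p with
  | zero => simp
  | succ p ih =>
    rw [pow_succ', Equiv.Perm.mul_apply, ih, finRotate_succ_apply]
    push_cast
    abel

def mySigma {m : ℕ} (k : Fin (m+1)) : Equiv.Perm (Fin (m+1)) :=
  (Fin.cycleRange k)⁻¹ * (finRotate (m+1)) ^ ((k : ℕ) + 1)

lemma coe_mySigma {m : ℕ} (k t : Fin (m+1)) :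
    ((mySigma k t : Fin (m+1)) : ℕ) =
      if (t : ℕ) + k + 1 < m + 1 then (t : ℕ) + k + 1
      else if (t : ℕ) + k + 1 = m + 1 then (k : ℕ)
      else (t : ℕ) + k - m - 1 := by
  have ha : (k : ℕ) < m + 1 := k.isLt
  have ht : (t : ℕ) < m + 1 := t.isLt
  -- value of the rotated element
  have hy : (((finRotate (m+1)) ^ ((k : ℕ) + 1)) t : ℕ) =
      if (t : ℕ) + k + 1 < m + 1 then (t : ℕ) + k + 1 else (t : ℕ) + k + 1 - (m+1) := by
    rw [finRotate_pow_apply]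
    rw [Fin.add_def]
    simp only [Fin.val_natCast]
    rcases Nat.lt_or_ge ((k : ℕ) + 1) (m+1) with h | h
    · rw [Nat.mod_eq_of_lt h]
      rcases Nat.lt_or_ge ((t : ℕ) + ((k:ℕ) + 1)) (m+1) with h2 | h2
      · rw [Nat.mod_eq_of_lt (by omega)]
        rw [if_pos (by omega)]
        omega
      · rw [if_neg (by omega)]
        rw [Nat.mod_eq_sub_mod (by omega), Nat.mod_eq_of_lt (by omega)]
        omega
    · have hk1 : (k : ℕ) + 1 = m + 1 := by omega
      rw [hk1, Nat.mod_self, Nat.add_zero, Nat.mod_eq_of_lt ht, if_neg (by omega)]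
      omega
  have hms : mySigma k t = (Fin.cycleRange k)⁻¹ (((finRotate (m+1)) ^ ((k : ℕ) + 1)) t) := rfl
  set y := ((finRotate (m+1)) ^ ((k : ℕ) + 1)) t with hydef
  rcases Nat.lt_trichotomy ((t : ℕ) + k + 1) (m+1) with hc | hc | hc
  · -- branch 1 : result is t+k+1, which is > k, fixed by cycleRange
    have hyv : (y : ℕ) = (t : ℕ) + k + 1 := by rw [hy, if_pos hc]
    have hky : k < y := by rw [Fin.lt_def, hyv]; omega
    have hcy : Fin.cycleRange k y = y := Fin.cycleRange_of_gt hky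
    rw [hms, ← hcy, Equiv.Perm.inv_def, Equiv.symm_apply_apply, hyv, if_pos hc]
  · -- branch 2 : y = 0, preimage is k
    have hyv : y = 0 := by
      apply Fin.ext
      rw [hy, if_neg (by omega)]
      simpa using by omega
    have hcy : Fin.cycleRange k k = y := by rw [hyv, Fin.cycleRange_self]
    rw [hms, ← hcy, Equiv.Perm.inv_def, Equiv.symm_apply_apply, if_neg (by omega), if_pos hc]
  · -- branch 3 : y ∈ [1,k], preimage is y - 1
    have hx0 : (t : ℕ) + k - m - 1 < m + 1 := by omega
    set x : Fin (m+1) := ⟨(t : ℕ) + k - m - 1, hx0⟩ with hxdef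
    have hxk : x < k := by rw [Fin.lt_def]; simp [hxdef]; omega
    have hcy : Fin.cycleRange k x = y := by
      rw [Fin.cycleRange_of_lt hxk]
      apply Fin.ext
      rw [Fin.val_add_one_of_lt (by rw [Fin.lt_def]; simp [hxdef]; omega)]
      rw [hy, if_neg (by omega)]
      simp [hxdef]
      omega
    rw [hms, ← hcy, Equiv.Perm.inv_def, Equiv.symm_apply_apply, if_neg (by omega), if_neg (by omega)]

lemma sign_mySigma {m : ℕ} (hm : Odd m) (k : Fin (m+1)) :
    Equiv.Perm.sign (mySigma k) = -1 := by
  rw [mySigma, map_mul, map_inv, Fin.sign_cycleRange, map_pow, sign_finRotate]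
  have h0 : (-1 : ℤˣ)⁻¹ = -1 := by decide
  rw [← inv_pow, h0, ← pow_mul, ← pow_add]
  apply Odd.neg_one_pow
  rcases hm with ⟨c, rfl⟩
  exact ⟨(k : ℕ) + (k:ℕ) * c + c, by rw [Nat.add_sub_cancel]; ring⟩

lemma mySigma_mul_mySigma {m : ℕ} (k : Fin (m+1)) :
    mySigma k * mySigma ⟨m - (k : ℕ), by omega⟩ = 1 := by
  ext t
  rw [Equiv.Perm.mul_apply, Equiv.Perm.one_apply]
  rw [coe_mySigma, coe_mySigma]
  have ht := t.isLt
  have hk := k.isLt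
  have hv : ((⟨m - (k:ℕ), by omega⟩ : Fin (m+1)) : ℕ) = m - (k:ℕ) := rfl
  rw [hv]
  split_ifs <;> omega

lemma mySigma_symm_apply {m : ℕ} (k : Fin (m+1)) :
    (mySigma k)⁻¹ k = ⟨m - (k : ℕ), by omega⟩ := by
  have h := mySigma_mul_mySigma k
  have h2 : mySigma k ⟨m - (k : ℕ), by omega⟩ = k := by
    apply Fin.ext
    rw [coe_mySigma]
    have hk := k.isLt
    have hv : ((⟨m - (k:ℕ), by omega⟩ : Fin (m+1)) : ℕ) = m - (k:ℕ) := rfl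
    rw [hv, if_neg (by omega), if_pos (by omega)]
  apply Equiv.injective (mySigma k)
  rw [Equiv.Perm.inv_def, Equiv.apply_symm_apply, h2]

lemma trace_rotate {B : Type*} [Ring B] [Algebra ℂ B] (φ : B →ₗ[ℂ] ℂ)
    (hφ : ∀ x y : B, φ (x * y) = φ (y * x)) (l : List B) (p : ℕ) (hp : p ≤ l.length) :
    φ ((l.rotate p).prod) = φ l.prod := by
  rw [List.rotate_eq_drop_append_take hp, List.prod_append, hφ, ← List.prod_append,
    List.take_append_drop]

lemma word_eq_rotate {B : Type*} {m : ℕ} (W : Fin (m+1) → B) (π : Equiv.Perm (Fin (m+1)))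
    (k : Fin (m+1)) :
    (W (π k) :: List.ofFn fun t => W (π (mySigma k t))) =
      (W (π k) :: List.ofFn fun t => W (π t)).rotate ((k : ℕ) + 1) := by
  have hk := k.isLt
  have hget : ∀ (x : B) (f : Fin (m+1) → B) (q : ℕ) (h : q < (x :: List.ofFn f).length),
      (x :: List.ofFn f)[q] = if hq : q = 0 then x
        else f ⟨q - 1, by simp at h; omega⟩ := by
    intro x f q h
    rcases q with _ | q
    · simp
    · simp only [List.getElem_cons_succ, List.getElem_ofFn, dif_neg (Nat.succ_ne_zero q)]
      refine congrArg f (Fin.ext ?_)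
      simp only [Fin.val_mk]
      omega
  apply List.ext_getElem
  · simp
  intro i h1 h2
  have hi : i < m + 2 := by simp at h1; omega
  rw [List.getElem_rotate]
  have hq : (i + ((k : ℕ) + 1)) % ((W (π k) :: List.ofFn fun t => W (π t)).length)
      = if i + (k : ℕ) + 1 < m + 2 then i + (k : ℕ) + 1 else i + (k : ℕ) + 1 - (m + 2) := by
    have hlen : (W (π k) :: List.ofFn fun t => W (π t)).length = m + 2 := by simp
    rw [hlen]
    split_ifs with h
    · rw [Nat.mod_eq_of_lt (by omega)]; omega
    · rw [Nat.mod_eq_sub_mod (by omega), Nat.mod_eq_of_lt (by omega)]; omega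
  rw [hget, hget]
  split_ifs with e1 e2 e2
  · rfl
  · -- i = 0, rotated index nonzero
    subst e1
    refine congrArg W (congrArg π (Fin.ext ?_))
    simp only [Fin.val_mk]
    rw [hq]
    split_ifs <;> omega
  · -- i ≠ 0, rotated index zero
    rw [hq] at e2
    refine congrArg W (congrArg π (Fin.ext ?_))
    rw [coe_mySigma]
    simp only [Fin.val_mk]
    split_ifs at e2 ⊢ <;> omega
  · -- generic case
    rw [hq] at e2
    refine congrArg W (congrArg π (Fin.ext ?_))
    rw [coe_mySigma]
    simp only [Fin.val_mk]
    rw [hq]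
    split_ifs at e2 ⊢ <;> omega

lemma phi_word_invariant {B : Type*} [Ring B] [Algebra ℂ B] (φ : B →ₗ[ℂ] ℂ)
    (hφ : ∀ x y : B, φ (x * y) = φ (y * x)) {m : ℕ}
    (W : Fin (m+1) → B) (π : Equiv.Perm (Fin (m+1))) (k : Fin (m+1)) :
    φ (W (π k) * (List.ofFn fun t => W (π (mySigma k t))).prod)
      = φ (W (π k) * (List.ofFn fun t => W (π t)).prod) := by
  have hk := k.isLt
  rw [← List.prod_cons, ← List.prod_cons, word_eq_rotate,
    trace_rotate φ hφ _ _ (by simp)]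

lemma aux_sum {B : Type*} [Ring B] [Algebra ℂ B] (φ : B →ₗ[ℂ] ℂ)
    (hφ : ∀ x y : B, φ (x * y) = φ (y * x)) (m : ℕ) (hm : Even m)
    (W : Fin m → B) (j : Fin m) :
    ∑ π : Equiv.Perm (Fin m),
      ((Equiv.Perm.sign π : ℤ) : ℂ) * φ (W j * (List.ofFn fun t => W (π t)).prod) = 0 := by
  rcases m with _ | m
  · exact j.elim0
  have hodd : Odd m := Nat.not_even_iff_odd.mp (Nat.even_add_one.mp hm)
  set f : Equiv.Perm (Fin (m+1)) → ℂ := fun π =>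
    ((Equiv.Perm.sign π : ℤ) : ℂ) * φ (W j * (List.ofFn fun t => W (π t)).prod) with hf
  have key : ∀ π : Equiv.Perm (Fin (m+1)), f π + f (π * mySigma (π⁻¹ j)) = 0 := by
    intro π
    have hsign : Equiv.Perm.sign (π * mySigma (π⁻¹ j)) = - Equiv.Perm.sign π := by
      rw [map_mul, sign_mySigma hodd, mul_neg, mul_one]
    have hword : φ (W j * (List.ofFn fun t => W ((π * mySigma (π⁻¹ j)) t)).prod)
        = φ (W j * (List.ofFn fun t => W (π t)).prod) := by
      have hW : W j = W (π (π⁻¹ j)) := by rw [Equiv.Perm.inv_def, Equiv.apply_symm_apply]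
      simp only [Equiv.Perm.mul_apply]
      rw [hW]
      exact phi_word_invariant φ hφ W π (π⁻¹ j)
    rw [hf]
    simp only [hsign, hword]
    push_cast
    ring
  apply Finset.sum_ninvolution (g := fun π => π * mySigma (π⁻¹ j))
  · exact key
  · intro π hπ heq
    apply hπ
    have h0 := key π
    rw [heq] at h0
    exact add_self_eq_zero.mp h0
  · exact fun _ => Finset.mem_univ _
  · intro π
    have h1 : (π * mySigma (π⁻¹ j))⁻¹ j
        = ⟨m - ((π⁻¹ j : Fin (m+1)) : ℕ), by omega⟩ := by
      rw [mul_inv_rev, Equiv.Perm.mul_apply, mySigma_symm_apply]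
    rw [h1, mul_assoc, mySigma_mul_mySigma, mul_one]

/-- Vanishing claim (3.4): let `φ` be a trace on a `ℂ`-algebra `B`, `n` even with
`n ≥ 4`, and `W₂,…,W_{n-1} ∈ B` (indexed here by `Fin (n-2)`). Then for any index
`j` in this range,
`∑_{π ∈ S'} sgn(π) φ(W_j · W_{π(2)} ⋯ W_{π(n-1)}) = 0`,
where `S'` is the group of permutations of `{2,…,n-1}`. -/
theorem alternating_trace_sum_with_repeat_eq_zero {B : Type*} [Ring B] [Algebra ℂ B]
    (φ : B →ₗ[ℂ] ℂ) (hφ : ∀ x y : B, φ (x * y) = φ (y * x))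
    (n : ℕ) (hn : Even n) (h4 : 4 ≤ n) (W : Fin (n - 2) → B) (j : Fin (n - 2)) :
    ∑ π : Equiv.Perm (Fin (n - 2)),
      ((Equiv.Perm.sign π : ℤ) : ℂ) * φ (W j * (List.ofFn fun t => W (π t)).prod) = 0 := by
  apply aux_sum φ hφ (n - 2) _ W j
  rw [Nat.even_sub (by omega)]
  simp [hn]
end
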